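/- Let G be an m×n real matrix, C an n×n real symmetric positive definite matrix, Γ an m×m real symmetric positive definite matrix, y ∈ ℝᵐ, η > 0, and for j = 1,…,N_e let u₀^{(j)} ∈ ℝⁿ, ξ^{(j)} ∈ ℝᵐ and y^{(j)} = y + ξ^{(j)}. Assume: (i) ‖Γ^{-1/2}(y^{(j)} − G u₀^{(j)})‖ > η + (1/2)‖Γ^{-1/2} ξ^{(j)}‖ for every j; (ii) 0 < ρ < 1/‖(G C G^T + Γ)^{1/2} Γ^{-1/2}‖²; and (iii) τ > max{‖(G C G^T + Γ)^{-1/2} Γ^{1/2}‖², 1/ρ} · (max_j ‖Γ^{-1/2}(y^{(j)} − G u₀^{(j)})‖) / (η + (1/2) min_j ‖Γ^{-1/2} ξ^{(j)}‖). Define u₁^{(j)} = u₀^{(j)} + C G^T (G C G^T + Γ)^{-1}(y^{(j)} − G u₀^{(j)}). Then: (a) τ > 1/ρ; (b) for every j, the parameter α = 1 satisfies the discrepancy condition ρ‖Γ^{-1/2}(y^{(j)} − G u₀^{(j)})‖ ≤ ‖Γ^{1/2}(G C G^T + Γ)^{-1}(y^{(j)} − G u₀^{(j)})‖; and (c) for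 every j, ‖Γ^{-1/2}(y^{(j)} − G u₁^{(j)})‖ < τ(η + (1/2)‖Γ^{-1/2} ξ^{(j)}‖), i.e. each ensemble member satisfies the IR-enLM stopping criterion after one iteration, and the IR-enLM output equals the RML ensemble {u₁^{(j)}}. -/

import Mathlib

open Matrix

/-- The Euclidean norm of a vector in `ℝⁿ`. -/
noncomputable def euclNorm {k : ℕ} (v : Fin k → ℝ) : ℝ :=
  ‖(WithLp.equiv 2 (Fin k → ℝ)).symm v‖

/-- The operator (spectral) norm of a matrix, induced by the Euclidean norms. -/
noncomputable def l2OpNorm {k l : ℕ} (A : Matrix (Fin k) (Fin l) ℝ) : ℝ :=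
  ‖LinearMap.toContinuousLinearMap (Matrix.toEuclideanLin A)‖

/-- The positive semidefinite square root of a positive semidefinite matrix
(the Mathlib definition `Matrix.PosSemidef.sqrt` of December 2024, since removed). -/
noncomputable def Matrix.PosSemidef.sqrt {n 𝕜 : Type*} [Fintype n] [DecidableEq n] [RCLike 𝕜]
    [PartialOrder 𝕜]
    {A : Matrix n n 𝕜} (hA : A.PosSemidef) : Matrix n n 𝕜 :=
  hA.1.eigenvectorUnitary.1 * diagonal ((↑) ∘ Real.sqrt ∘ hA.1.eigenvalues) *
  (star hA.1.eigenvectorUnitary : Matrix n n 𝕜)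

lemma Matrix.PosSemidef.sqrt_mul_self {n : Type*} [Fintype n] [DecidableEq n]
    {A : Matrix n n ℝ} (hA : A.PosSemidef) : hA.sqrt * hA.sqrt = A := by
  unfold Matrix.PosSemidef.sqrt
  have hU : (star hA.1.eigenvectorUnitary : Matrix n n ℝ) * hA.1.eigenvectorUnitary.1 = 1 :=
    Unitary.coe_star_mul_self _
  have hD : diagonal ((↑) ∘ Real.sqrt ∘ hA.1.eigenvalues) *
      diagonal ((↑) ∘ Real.sqrt ∘ hA.1.eigenvalues) =
      diagonal (RCLike.ofReal ∘ hA.1.eigenvalues : n → ℝ) := by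
    rw [diagonal_mul_diagonal]
    congr 1; funext i
    simp [Real.mul_self_sqrt (hA.eigenvalues_nonneg i)]
  conv_rhs => rw [hA.1.spectral_theorem, Unitary.conjStarAlgAut_apply]
  calc _ = hA.1.eigenvectorUnitary.1 * diagonal ((↑) ∘ Real.sqrt ∘ hA.1.eigenvalues) *
      ((star hA.1.eigenvectorUnitary : Matrix n n ℝ) * hA.1.eigenvectorUnitary.1) *
      diagonal ((↑) ∘ Real.sqrt ∘ hA.1.eigenvalues) *
      (star hA.1.eigenvectorUnitary : Matrix n n ℝ) := by simp only [Matrix.mul_assoc]; rfl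
    _ = _ := by rw [hU, Matrix.mul_one, Matrix.mul_assoc _ (diagonal _) (diagonal _), hD]

lemma Matrix.PosSemidef.posSemidef_sqrt {n : Type*} [Fintype n] [DecidableEq n]
    {A : Matrix n n ℝ} (hA : A.PosSemidef) : hA.sqrt.PosSemidef := by
  unfold Matrix.PosSemidef.sqrt
  have h := (PosSemidef.diagonal (d := ((↑) ∘ Real.sqrt ∘ hA.1.eigenvalues : n → ℝ))
    (fun i => by simp [Real.sqrt_nonneg])).mul_mul_conjTranspose_same hA.1.eigenvectorUnitary.1
  simpa [star_eq_conjTranspose, Function.comp_def] using h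

open scoped Matrix.Norms.L2Operator in
lemma euclNorm_mulVec_le {k l : ℕ} (A : Matrix (Fin k) (Fin l) ℝ) (v : Fin l → ℝ) :
    euclNorm (A *ᵥ v) ≤ l2OpNorm A * euclNorm v :=
  A.l2_opNorm_mulVec ((WithLp.equiv 2 (Fin l → ℝ)).symm v)

open scoped Matrix.Norms.L2Operator in
lemma l2OpNorm_transpose {k l : ℕ} (A : Matrix (Fin k) (Fin l) ℝ) :
    l2OpNorm Aᵀ = l2OpNorm A := by
  have h := Matrix.l2_opNorm_conjTranspose A
  rwa [conjTranspose_eq_transpose_of_trivial] at h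

lemma l2OpNorm_nonneg {k l : ℕ} (A : Matrix (Fin k) (Fin l) ℝ) : 0 ≤ l2OpNorm A :=
  norm_nonneg _

lemma euclNorm_nonneg {k : ℕ} (v : Fin k → ℝ) : 0 ≤ euclNorm v := norm_nonneg _

set_option maxHeartbeats 1000000 in
/-- deterministic content of Proposition 1: under assumptions (i)-(iii),
(a) `τ > 1/ρ`; (b) `α = 1` satisfies the discrepancy condition for each ensemble member;
(c) each member `u₁⁽ʲ⁾ = u₀⁽ʲ⁾ + C Gᵀ (G C Gᵀ + Γ)⁻¹ (y⁽ʲ⁾ − G u₀⁽ʲ⁾)` satisfies the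
IR-enLM stopping criterion after one iteration, so the IR-enLM output is the RML ensemble.
(The hypothesis `hGCG` records that `G C Gᵀ + Γ` is symmetric positive definite, which follows
from positive definiteness of `C` and `Γ`.) -/
theorem irenlm_linear_case {m n Ne : ℕ} [NeZero Ne]
    (G : Matrix (Fin m) (Fin n) ℝ) (C : Matrix (Fin n) (Fin n) ℝ)
    (Γ : Matrix (Fin m) (Fin m) ℝ) (hC : C.PosDef) (hΓ : Γ.PosDef)
    (hGCG : (G * C * Gᵀ + Γ).PosDef)
    (y : Fin m → ℝ) (η : ℝ) (hη : 0 < η)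
    (u₀ : Fin Ne → Fin n → ℝ) (ξ : Fin Ne → Fin m → ℝ)
    (yj : Fin Ne → Fin m → ℝ) (hyj : ∀ j, yj j = y + ξ j)
    (ρ τ : ℝ)
    (h1 : ∀ j, euclNorm ((hΓ.posSemidef.sqrt)⁻¹ *ᵥ (yj j - G *ᵥ u₀ j)) >
      η + (1 / 2) * euclNorm ((hΓ.posSemidef.sqrt)⁻¹ *ᵥ ξ j))
    (h2 : 0 < ρ)
    (h2' : ρ < 1 / l2OpNorm (hGCG.posSemidef.sqrt * (hΓ.posSemidef.sqrt)⁻¹) ^ 2)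
    (h3 : τ > max (l2OpNorm ((hGCG.posSemidef.sqrt)⁻¹ * hΓ.posSemidef.sqrt) ^ 2) (1 / ρ) *
      ((⨆ j, euclNorm ((hΓ.posSemidef.sqrt)⁻¹ *ᵥ (yj j - G *ᵥ u₀ j))) /
        (η + (1 / 2) * ⨅ j, euclNorm ((hΓ.posSemidef.sqrt)⁻¹ *ᵥ ξ j)))) :
    let u₁ : Fin Ne → Fin n → ℝ := fun j =>
      u₀ j + (C * Gᵀ * (G * C * Gᵀ + Γ)⁻¹) *ᵥ (yj j - G *ᵥ u₀ j)
    τ > 1 / ρ ∧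
    (∀ j, ρ * euclNorm ((hΓ.posSemidef.sqrt)⁻¹ *ᵥ (yj j - G *ᵥ u₀ j)) ≤
      euclNorm (hΓ.posSemidef.sqrt *ᵥ (G * C * Gᵀ + Γ)⁻¹ *ᵥ (yj j - G *ᵥ u₀ j))) ∧
    (∀ j, euclNorm ((hΓ.posSemidef.sqrt)⁻¹ *ᵥ (yj j - G *ᵥ u₁ j)) <
      τ * (η + (1 / 2) * euclNorm ((hΓ.posSemidef.sqrt)⁻¹ *ᵥ ξ j))) := by
  intro u₁
  set S := hΓ.posSemidef.sqrt with hSdef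
  set T := hGCG.posSemidef.sqrt with hTdef
  set B := G * C * Gᵀ + Γ with hBdef
  -- basic matrix facts
  have hSS : S * S = Γ := hΓ.posSemidef.sqrt_mul_self
  have hTT : T * T = B := hGCG.posSemidef.sqrt_mul_self
  have hSsym : Sᵀ = S := by
    have := hΓ.posSemidef.posSemidef_sqrt.isHermitian
    rwa [Matrix.IsHermitian, conjTranspose_eq_transpose_of_trivial] at this
  have hTsym : Tᵀ = T := by
    have := hGCG.posSemidef.posSemidef_sqrt.isHermitian
    rwa [Matrix.IsHermitian, conjTranspose_eq_transpose_of_trivial] at this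
  have hSdetu : IsUnit S.det := by
    have h := hΓ.det_pos
    rw [← hSS, det_mul] at h
    exact isUnit_iff_ne_zero.2 (fun h0 => by simp [h0] at h)
  have hTdetu : IsUnit T.det := by
    have h := hGCG.det_pos
    rw [← hTT, det_mul] at h
    exact isUnit_iff_ne_zero.2 (fun h0 => by simp [h0] at h)
  have hBdetu : IsUnit B.det := isUnit_iff_ne_zero.2 (ne_of_gt hGCG.det_pos)
  have hSiS : S⁻¹ * S = 1 := nonsing_inv_mul S hSdetu
  have hSSi : S * S⁻¹ = 1 := mul_nonsing_inv S hSdetu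
  have hTiT : T⁻¹ * T = 1 := nonsing_inv_mul T hTdetu
  have hTTi : T * T⁻¹ = 1 := mul_nonsing_inv T hTdetu
  have hBBi : B * B⁻¹ = 1 := mul_nonsing_inv B hBdetu
  have hBi : B⁻¹ = T⁻¹ * T⁻¹ := by rw [← hTT, Matrix.mul_inv_rev]
  have hSiinv : S⁻¹ᵀ = S⁻¹ := by rw [transpose_nonsing_inv, hSsym]
  have hTiinv : T⁻¹ᵀ = T⁻¹ := by rw [transpose_nonsing_inv, hTsym]
  -- norms of the two key matrices
  set K1 := l2OpNorm (T * S⁻¹) with hK1def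
  set K2 := l2OpNorm (T⁻¹ * S) with hK2def
  have hK1' : l2OpNorm (S⁻¹ * T) = K1 := by
    rw [← l2OpNorm_transpose (S⁻¹ * T), transpose_mul, hTsym, hSiinv]
  have hK2' : l2OpNorm (S * T⁻¹) = K2 := by
    rw [← l2OpNorm_transpose (S * T⁻¹), transpose_mul, hSsym, hTiinv]
  -- shorthand
  set Nf : Fin Ne → ℝ := fun j => euclNorm (S⁻¹ *ᵥ (yj j - G *ᵥ u₀ j)) with hNf
  set Ef : Fin Ne → ℝ := fun j => euclNorm (S⁻¹ *ᵥ ξ j) with hEf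
  set Sup := ⨆ j, Nf j with hSup
  set Inf := ⨅ j, Ef j with hInf
  set Mx := max (K2 ^ 2) (1 / ρ) with hMx
  have hNle : ∀ j, Nf j ≤ Sup := fun j => le_ciSup (Finite.bddAbove_range Nf) j
  have hEge : ∀ j, Inf ≤ Ef j := fun j => ciInf_le (Finite.bddBelow_range Ef) j
  have hInf0 : 0 ≤ Inf := le_ciInf fun j => euclNorm_nonneg _
  have hd : 0 < η + 1 / 2 * Inf := by linarith
  have j0 : Fin Ne := ⟨0, Nat.pos_of_ne_zero (NeZero.ne Ne)⟩
  have hSupgt : η + 1 / 2 * Inf < Sup :=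
    lt_of_lt_of_le (by have := h1 j0; have := hEge j0; simp only [hNf, hEf] at *; linarith)
      (hNle j0)
  have hSup0 : 0 ≤ Sup := le_trans (le_of_lt hd) (le_of_lt hSupgt)
  have hMxpos : 0 < Mx := lt_of_lt_of_le (by positivity) (le_max_right _ _)
  have hratio : 1 < Sup / (η + 1 / 2 * Inf) := (one_lt_div hd).2 hSupgt
  -- (a)
  have hτMx : Mx < τ := by
    have : Mx * 1 < Mx * (Sup / (η + 1 / 2 * Inf)) :=
      mul_lt_mul_of_pos_left hratio hMxpos
    rw [mul_one] at this
    exact lt_trans this h3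
  have ha : τ > 1 / ρ := lt_of_le_of_lt (le_max_right _ _) hτMx
  refine ⟨ha, ?_, ?_⟩
  -- (b)
  · intro j
    set r := yj j - G *ᵥ u₀ j with hr
    have hTB : T * B⁻¹ = T⁻¹ := by
      rw [hBi, ← Matrix.mul_assoc, hTTi, Matrix.one_mul]
    have e1 : S⁻¹ *ᵥ r = (S⁻¹ * T) *ᵥ (T⁻¹ *ᵥ r) := by
      rw [mulVec_mulVec, Matrix.mul_assoc, hTTi, Matrix.mul_one]
    have e2 : T⁻¹ *ᵥ r = (T * S⁻¹) *ᵥ (S *ᵥ B⁻¹ *ᵥ r) := by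
      rw [mulVec_mulVec, mulVec_mulVec, Matrix.mul_assoc T S⁻¹ S, hSiS,
        Matrix.mul_one, hTB]
    have hb1 : euclNorm (S⁻¹ *ᵥ r) ≤ K1 * (K1 * euclNorm (S *ᵥ B⁻¹ *ᵥ r)) := by
      calc euclNorm (S⁻¹ *ᵥ r) = euclNorm ((S⁻¹ * T) *ᵥ (T⁻¹ *ᵥ r)) := by rw [← e1]
        _ ≤ l2OpNorm (S⁻¹ * T) * euclNorm (T⁻¹ *ᵥ r) := euclNorm_mulVec_le _ _
        _ = K1 * euclNorm ((T * S⁻¹) *ᵥ (S *ᵥ B⁻¹ *ᵥ r)) := by rw [hK1', ← e2]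
        _ ≤ K1 * (K1 * euclNorm (S *ᵥ B⁻¹ *ᵥ r)) := by
            have := euclNorm_mulVec_le (T * S⁻¹) (S *ᵥ B⁻¹ *ᵥ r)
            have hK1nn : 0 ≤ K1 := l2OpNorm_nonneg _
            exact mul_le_mul_of_nonneg_left this hK1nn
    have hρK1 : ρ * K1 ^ 2 ≤ 1 := by
      have hK1nn : 0 ≤ K1 := l2OpNorm_nonneg _
      rcases eq_or_lt_of_le (sq_nonneg K1) with h0 | h0
      · nlinarith
      · have := (lt_div_iff₀ h0).1 h2'
        linarith
    have hX : 0 ≤ euclNorm (S *ᵥ B⁻¹ *ᵥ r) := euclNorm_nonneg _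
    nlinarith [euclNorm_nonneg (S⁻¹ *ᵥ r), mul_le_mul_of_nonneg_left hb1 (le_of_lt h2)]
  -- (c)
  · intro j
    set r := yj j - G *ᵥ u₀ j with hr
    -- the residual after one step
    have hres : yj j - G *ᵥ u₁ j = (1 - G * C * Gᵀ * B⁻¹) *ᵥ r := by
      show yj j - G *ᵥ (u₀ j + (C * Gᵀ * B⁻¹) *ᵥ r) = _
      rw [mulVec_add, mulVec_mulVec, sub_mulVec, one_mulVec, ← Matrix.mul_assoc,
        ← Matrix.mul_assoc, hr]
      abel
    have hmat : S⁻¹ * (1 - G * C * Gᵀ * B⁻¹) = S * B⁻¹ := by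
      have h1m : (1 : Matrix (Fin m) (Fin m) ℝ) - G * C * Gᵀ * B⁻¹ = Γ * B⁻¹ := by
        rw [← hBBi, hBdef, Matrix.add_mul, add_sub_cancel_left]
      rw [h1m, ← Matrix.mul_assoc, ← hSS, ← Matrix.mul_assoc, hSiS, Matrix.one_mul]
    have hres2 : S⁻¹ *ᵥ (yj j - G *ᵥ u₁ j) = (S * B⁻¹) *ᵥ r := by
      rw [hres, mulVec_mulVec, hmat]
    have e3 : (S * B⁻¹) *ᵥ r = (S * T⁻¹) *ᵥ ((T⁻¹ * S) *ᵥ (S⁻¹ *ᵥ r)) := by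
      rw [mulVec_mulVec, mulVec_mulVec, Matrix.mul_assoc (S * T⁻¹) (T⁻¹ * S) S⁻¹,
        Matrix.mul_assoc T⁻¹ S S⁻¹, hSSi, Matrix.mul_one, Matrix.mul_assoc S T⁻¹ T⁻¹,
        ← hBi]
    have hc1 : euclNorm (S⁻¹ *ᵥ (yj j - G *ᵥ u₁ j)) ≤ K2 * (K2 * Nf j) := by
      calc euclNorm (S⁻¹ *ᵥ (yj j - G *ᵥ u₁ j))
          = euclNorm ((S * T⁻¹) *ᵥ ((T⁻¹ * S) *ᵥ (S⁻¹ *ᵥ r))) := by rw [hres2, e3]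
        _ ≤ l2OpNorm (S * T⁻¹) * euclNorm ((T⁻¹ * S) *ᵥ (S⁻¹ *ᵥ r)) := euclNorm_mulVec_le _ _
        _ ≤ K2 * (K2 * Nf j) := by
            rw [hK2']
            have := euclNorm_mulVec_le (T⁻¹ * S) (S⁻¹ *ᵥ r)
            have hK2nn : 0 ≤ K2 := l2OpNorm_nonneg _
            exact mul_le_mul_of_nonneg_left this hK2nn
    have hNfnn : 0 ≤ Nf j := euclNorm_nonneg _
    have hK2Mx : K2 ^ 2 ≤ Mx := le_max_left _ _
    have hc2 : euclNorm (S⁻¹ *ᵥ (yj j - G *ᵥ u₁ j)) ≤ Mx * Sup := by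
      have h4 : K2 * (K2 * Nf j) = K2 ^ 2 * Nf j := by ring
      have h5 : K2 ^ 2 * Nf j ≤ Mx * Sup :=
        mul_le_mul hK2Mx (hNle j) hNfnn (le_of_lt hMxpos)
      linarith [hc1, h4 ▸ hc1]
    -- final strict inequality
    have hdj : 0 < η + 1 / 2 * Ef j := by
      have := hEge j; linarith
    have step1 : Mx * Sup ≤ Mx * (Sup / (η + 1 / 2 * Inf)) * (η + 1 / 2 * Ef j) := by
      have h6 : Mx * (Sup / (η + 1 / 2 * Inf)) * (η + 1 / 2 * Inf) = Mx * Sup := by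
        rw [mul_assoc, div_mul_cancel₀ Sup (ne_of_gt hd)]
      have h7 : 0 ≤ Mx * (Sup / (η + 1 / 2 * Inf)) := by positivity
      have h8 : η + 1 / 2 * Inf ≤ η + 1 / 2 * Ef j := by have := hEge j; linarith
      calc Mx * Sup = Mx * (Sup / (η + 1 / 2 * Inf)) * (η + 1 / 2 * Inf) := h6.symm
        _ ≤ Mx * (Sup / (η + 1 / 2 * Inf)) * (η + 1 / 2 * Ef j) :=
            mul_le_mul_of_nonneg_left h8 h7
    have step2 : Mx * (Sup / (η + 1 / 2 * Inf)) * (η + 1 / 2 * Ef j) <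
        τ * (η + 1 / 2 * Ef j) :=
      mul_lt_mul_of_pos_right h3 hdj
    exact lt_of_le_of_lt hc2 (lt_of_le_of_lt step1 step2)
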